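/- arXiv:2305.01139 — 3 statements merged into one kernel-verified Lean document; each statement's English description precedes it below -/
import Mathlib

section
/- For the selective classifier f_δ defined by rejecting exactly on the δε-margin region of f* (f_δ(x) = ⊥ if x ∈ N(f*, δε), else f_δ(x) = f*(x)), and for every α ∈ [0,1], the robust error with rejection of f_δ at α is at most the standard robust error of f* at budget ε' = max{(α+δ)ε, (1−δ)ε}. That is, R_ε(f_δ, α) ≤ Rob_{ε'}(f*). -/
open MeasureTheory Metric Set
open scoped Classical

theorem stmt1 {X : Type*} [NormedAddCommGroup X] [NormedSpace ℝ X] [MeasurableSpace X]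
    (μ : Measure (X × Bool)) [IsProbabilityMeasure μ]
    (fstar : X → Bool) (ε δ α : ℝ) (hε : 0 ≤ ε)
    (hδ : δ ∈ Set.Icc (0:ℝ) 1) (hα : α ∈ Set.Icc (0:ℝ) 1)
    (fδ : X → Option Bool)
    (hfδ : ∀ x, fδ x = if ∃ x' ∈ closedBall x (δ * ε), fstar x' ≠ fstar x then none
      else some (fstar x)) :
    μ {p : X × Bool | (∃ x' ∈ closedBall p.1 (α * ε), fδ x' ≠ some p.2) ∨
        ∃ x'' ∈ closedBall p.1 ε, fδ x'' ≠ some p.2 ∧ fδ x'' ≠ none}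
      ≤ μ {p : X × Bool | ∃ x' ∈ closedBall p.1 (max ((α + δ) * ε) ((1 - δ) * ε)),
          fstar x' ≠ p.2} := by
  apply measure_mono
  intro p hp
  obtain ⟨hδ0, hδ1⟩ := hδ
  obtain ⟨hα0, hα1⟩ := hα
  have hδε : 0 ≤ δ * ε := mul_nonneg hδ0 hε
  have hαε : 0 ≤ α * ε := mul_nonneg hα0 hε
  have h1δ : 0 ≤ (1 - δ) * ε := mul_nonneg (by linarith) hε
  have h1 : α * ε + δ * ε ≤ max ((α + δ) * ε) ((1 - δ) * ε) := by
    rw [← add_mul]; exact le_max_left _ _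
  have h2 : (1 - δ) * ε ≤ max ((α + δ) * ε) ((1 - δ) * ε) := le_max_right _ _
  simp only [Set.mem_setOf_eq] at hp ⊢
  rcases hp with ⟨x', hx', hne⟩ | ⟨x'', hx'', hne, hnn⟩
  · rw [mem_closedBall] at hx'
    rw [hfδ x'] at hne
    split_ifs at hne with h
    · obtain ⟨x2, hx2, hfx2⟩ := h
      rw [mem_closedBall] at hx2
      by_cases hc : fstar x' = p.2
      · refine ⟨x2, mem_closedBall.2 ?_, by rw [hc] at hfx2; exact hfx2⟩
        calc dist x2 p.1 ≤ dist x2 x' + dist x' p.1 := dist_triangle _ _ _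
          _ ≤ δ * ε + α * ε := add_le_add hx2 hx'
          _ ≤ _ := by linarith [h1]
      · exact ⟨x', mem_closedBall.2 (hx'.trans (by linarith [h1])), hc⟩
    · refine ⟨x', mem_closedBall.2 (hx'.trans (by linarith [h1])), ?_⟩
      simpa using hne
  · rw [hfδ x''] at hne hnn
    split_ifs at hne hnn with h
    · exact absurd rfl hnn
    · push_neg at h
      have hfne : fstar x'' ≠ p.2 := by simpa using hne
      rw [mem_closedBall] at hx''
      by_cases hD : dist x'' p.1 ≤ (1 - δ) * ε
      · exact ⟨x'', mem_closedBall.2 (hD.trans h2), hfne⟩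
      · push_neg at hD
        have hDpos : 0 < dist x'' p.1 := lt_of_le_of_lt h1δ hD
        set D := dist x'' p.1 with hDdef
        set s := max (D - δ * ε) 0 with hs
        have hs0 : 0 ≤ s := le_max_right _ _
        have hsD : s ≤ D := max_le (by linarith) hDpos.le
        have hsle : s ≤ (1 - δ) * ε := max_le (by linarith) h1δ
        have hsge : D - δ * ε ≤ s := le_max_left _ _
        set x₃ := p.1 + (s / D) • (x'' - p.1) with hx3
        have hnorm : ‖x'' - p.1‖ = D := by rw [hDdef, dist_eq_norm]
        have hd3 : dist x₃ p.1 = s := by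
          rw [hx3, dist_eq_norm, add_sub_cancel_left, norm_smul, hnorm,
            Real.norm_eq_abs, abs_of_nonneg (div_nonneg hs0 hDpos.le),
            div_mul_cancel₀ _ hDpos.ne']
        have hd3' : dist x₃ x'' ≤ δ * ε := by
          have hdiff : x₃ - x'' = (s / D - 1) • (x'' - p.1) := by
            rw [hx3]; module
          have hle1 : s / D ≤ 1 := (div_le_one hDpos).2 hsD
          rw [dist_eq_norm, hdiff, norm_smul, hnorm, Real.norm_eq_abs,
            abs_of_nonpos (by linarith)]
          have : -(s / D - 1) * D = D - s := by field_simp; ring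
          linarith [this]
        refine ⟨x₃, mem_closedBall.2 ?_, ?_⟩
        · rw [hd3]; exact hsle.trans h2
        · rw [h x₃ (mem_closedBall.2 hd3')]; exact hfne
end

section
/- There exist a data distribution and a base classifier witnessing tightness of the margin-rejection bound: for the 1-dimensional distribution placing mass (1−β)/2 at (−4ε,−1), β/2 at (−αε/4,−1), β/2 at (αε/4,+1), and (1−β)/2 at (4ε,+1), with f*(x) = sign(x+ε) and δ = (1−α)/2 so that ε' = (1+α)ε/2, one has Rob_{ε'}(f*) = β/2, and every selective classifier f: ℝ → {−1,+1,⊥} satisfies R_ε(f, α) ≥ β/2. -/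
open MeasureTheory Set

theorem stmt4 (ε α β : ℝ) (hε : 0 < ε) (hα : α ∈ Set.Icc (0:ℝ) 1)
    (hβ : β ∈ Set.Ioo (0:ℝ) (1/2))
    (μ : Measure (ℝ × Bool))
    (hμ : μ = ENNReal.ofReal ((1 - β) / 2) • Measure.dirac ((-4 * ε, false) : ℝ × Bool)
      + ENNReal.ofReal (β / 2) • Measure.dirac ((-(α * ε / 4), false) : ℝ × Bool)
      + ENNReal.ofReal (β / 2) • Measure.dirac ((α * ε / 4, true) : ℝ × Bool)
      + ENNReal.ofReal ((1 - β) / 2) • Measure.dirac ((4 * ε, true) : ℝ × Bool))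
    (fstar : ℝ → Bool) (hf : ∀ x, fstar x = decide (0 ≤ x + ε)) :
    μ {p : ℝ × Bool | ∃ x', |x' - p.1| ≤ (1 + α) * ε / 2 ∧ fstar x' ≠ p.2}
      = ENNReal.ofReal (β / 2) ∧
    ∀ f : ℝ → Option Bool,
      ENNReal.ofReal (β / 2) ≤
        μ {p : ℝ × Bool | (∃ x', |x' - p.1| ≤ α * ε ∧ f x' ≠ some p.2) ∨
          ∃ x'', |x'' - p.1| ≤ ε ∧ f x'' ≠ some p.2 ∧ f x'' ≠ none} := by
  obtain ⟨hα0, hα1⟩ := hα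
  obtain ⟨hβ0, hβ1⟩ := hβ
  subst hμ
  constructor
  · set S : Set (ℝ × Bool) :=
      {p : ℝ × Bool | ∃ x', |x' - p.1| ≤ (1 + α) * ε / 2 ∧ fstar x' ≠ p.2} with hS
    have h1 : ((-(4 * ε), false) : ℝ × Bool) ∉ S := by
      rintro ⟨x', hd, hne⟩
      apply hne
      rw [hf]
      rw [abs_le] at hd
      simp only at hd
      have : ¬ (0 ≤ x' + ε) := by nlinarith [hd.1, hd.2]
      simp [this]
    have h2 : ((-(α * ε / 4), false) : ℝ × Bool) ∈ S := by
      refine ⟨0, ?_, ?_⟩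
      · simp only
        rw [show (0:ℝ) - -(α * ε / 4) = α * ε / 4 by ring,
          abs_of_nonneg (by positivity)]
        nlinarith
      · rw [hf]
        simp [hε.le]
    have h3 : ((α * ε / 4, true) : ℝ × Bool) ∉ S := by
      rintro ⟨x', hd, hne⟩
      apply hne
      rw [hf]
      rw [abs_le] at hd
      simp only at hd
      have : (0 ≤ x' + ε) := by nlinarith [hd.1, hd.2]
      simp [this]
    have h4 : ((4 * ε, true) : ℝ × Bool) ∉ S := by
      rintro ⟨x', hd, hne⟩
      apply hne
      rw [hf]
      rw [abs_le] at hd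
      simp only at hd
      have : (0 ≤ x' + ε) := by nlinarith [hd.1, hd.2]
      simp [this]
    simp [Measure.add_apply, Measure.smul_apply, smul_eq_mul, Measure.dirac_apply,
      Set.indicator_of_mem h2, Set.indicator_of_notMem h1,
      Set.indicator_of_notMem h3, Set.indicator_of_notMem h4]
  · intro f
    set S : Set (ℝ × Bool) :=
      {p : ℝ × Bool | (∃ x', |x' - p.1| ≤ α * ε ∧ f x' ≠ some p.2) ∨
          ∃ x'', |x'' - p.1| ≤ ε ∧ f x'' ≠ some p.2 ∧ f x'' ≠ none} with hS
    have hd2 : |(0:ℝ) - -(α * ε / 4)| ≤ α * ε := by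
      rw [show (0:ℝ) - -(α * ε / 4) = α * ε / 4 by ring,
        abs_of_nonneg (by positivity)]
      nlinarith
    have hd3 : |(0:ℝ) - α * ε / 4| ≤ α * ε := by
      rw [show (0:ℝ) - α * ε / 4 = -(α * ε / 4) by ring, abs_neg,
        abs_of_nonneg (by positivity)]
      nlinarith
    have key : ((-(α * ε / 4), false) : ℝ × Bool) ∈ S ∨
        ((α * ε / 4, true) : ℝ × Bool) ∈ S := by
      by_cases hf0 : f 0 = some false
      · right; exact Or.inl ⟨0, hd3, by simp [hf0]⟩
      · left; exact Or.inl ⟨0, hd2, hf0⟩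
    rcases key with hk | hk
    · calc ENNReal.ofReal (β / 2)
          = ENNReal.ofReal (β / 2) * Measure.dirac ((-(α * ε / 4), false) : ℝ × Bool) S := by
            rw [Measure.dirac_apply_of_mem hk, mul_one]
        _ ≤ _ := by
            simp only [Measure.add_apply, Measure.smul_apply, smul_eq_mul]
            exact le_add_right (le_add_right le_add_self)
    · calc ENNReal.ofReal (β / 2)
          = ENNReal.ofReal (β / 2) * Measure.dirac ((α * ε / 4, true) : ℝ × Bool) S := by
            rw [Measure.dirac_apply_of_mem hk, mul_one]
        _ ≤ _ := by
            simp only [Measure.add_apply, Measure.smul_apply, smul_eq_mul]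
            exact le_add_right (le_add_left le_rfl)
end

section
/- For the margin-rejection classifier f_δ with δ ∈ [0,1/2] built from a zero-standard-error binary classifier f*, if a clean point x (with label y = f*(x)) is at distance greater than (1−δ)ε from the decision boundary of f*, then: (a) every perturbation x' with d(x,x') ≤ (1−2δ)ε satisfies f_δ(x') = y (correctly classified, not rejected), and (b) every perturbation x' with d(x,x') ≤ ε satisfies f_δ(x') ∈ {y, ⊥} (never misclassified). -/
open Metric Set
open scoped Classical

theorem stmt18 {X : Type*} [NormedAddCommGroup X] [NormedSpace ℝ X]
    (fstar : X → Bool) (ε δ : ℝ) (hε : 0 ≤ ε) (hδ : δ ∈ Set.Icc (0:ℝ) (1/2))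
    (fδ : X → Option Bool)
    (hfδ : ∀ z, fδ z = if infDist z {w | fstar w ≠ fstar z} ≤ δ * ε then none
      else some (fstar z))
    (x : X) (y : Bool) (hy : fstar x = y)
    (hfar : (1 - δ) * ε < infDist x {w | fstar w ≠ fstar x}) :
    (∀ x', dist x x' ≤ (1 - 2 * δ) * ε → fδ x' = some y) ∧
    (∀ x', dist x x' ≤ ε → fδ x' = some y ∨ fδ x' = none) := by
  obtain ⟨hδ0, hδ2⟩ := hδ
  constructor
  · intro x' hx'
    have hne : fstar x' = fstar x := by
      by_contra h
      have hmem : x' ∈ {w | fstar w ≠ fstar x} := h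
      have hle : infDist x {w | fstar w ≠ fstar x} ≤ dist x x' :=
        infDist_le_dist_of_mem hmem
      nlinarith
    have hset : {w | fstar w ≠ fstar x'} = {w | fstar w ≠ fstar x} := by rw [hne]
    have h1 : infDist x {w | fstar w ≠ fstar x} ≤
        infDist x' {w | fstar w ≠ fstar x} + dist x x' := infDist_le_infDist_add_dist
    rw [hfδ x', hset, if_neg (by push_neg; nlinarith), hne, hy]
  · intro x' hx'
    rw [hfδ x']
    by_cases hc : infDist x' {w | fstar w ≠ fstar x'} ≤ δ * ε
    · right; rw [if_pos hc]
    · push_neg at hc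
      by_cases heq : fstar x' = fstar x
      · left; rw [if_neg (not_le.2 hc), heq, hy]
      · exfalso
        have hmemx : x ∈ {w | fstar w ≠ fstar x'} := fun h => heq h.symm
        have hr0 : infDist x' {w | fstar w ≠ fstar x'} ≤ dist x' x :=
          infDist_le_dist_of_mem hmemx
        have hr' : δ * ε < dist x x' := by rw [dist_comm x x']; linarith
        have hrpos : 0 < dist x x' := lt_of_le_of_lt (mul_nonneg hδ0 hε) hr'
        set r := dist x x' with hrdef
        set z := x' + (δ * ε / r) • (x - x') with hz
        have hnorm : ‖x - x'‖ = r := by rw [hrdef, dist_eq_norm]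
        have hzx' : dist z x' = δ * ε := by
          rw [dist_eq_norm]
          have : z - x' = (δ * ε / r) • (x - x') := by rw [hz]; abel
          rw [this, norm_smul, hnorm, Real.norm_eq_abs,
            abs_of_nonneg (div_nonneg (mul_nonneg hδ0 hε) hrpos.le)]
          field_simp
        have hxz : dist x z = r - δ * ε := by
          rw [dist_eq_norm]
          have : x - z = (1 - δ * ε / r) • (x - x') := by
            rw [hz, sub_smul, one_smul]; abel
          rw [this, norm_smul, hnorm, Real.norm_eq_abs]
          rw [abs_of_nonneg (by
            rw [sub_nonneg, div_le_one hrpos]; exact hr'.le)]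
          field_simp
        have hfz : fstar z = fstar x' := by
          by_contra h
          have : infDist x' {w | fstar w ≠ fstar x'} ≤ dist x' z :=
            infDist_le_dist_of_mem h
          rw [dist_comm, hzx'] at this
          linarith
        have hzmem : z ∈ {w | fstar w ≠ fstar x} := by
          simp only [mem_setOf_eq, hfz]; exact heq
        have : infDist x {w | fstar w ≠ fstar x} ≤ dist x z :=
          infDist_le_dist_of_mem hzmem
        rw [hxz] at this
        linarith
end
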